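/- Assume consistency, ignorability, positivity, and the treatment-conditional measurement error model with parameters α_t, β_t ∈ [0,1), α_t + β_t < 1. Fix t ∈ {0,1}, and suppose the min and max anchor assumptions hold for the target potential outcome: min over x with P(X = x) > 0 of P(Y*_t = 1 | X = x) equals 0, and max over such x of P(Y*_t = 1 | X = x) equals 1. Then the error parameters are identified from the observational distribution: α_t = min over x with P(X = x) > 0 of P(Y = 1 | X = x, T = t), and β_t = 1 − max over such x of P(Y = 1 | X = x, T = t). -/

import Mathlib

open scoped Classical
open Finset

/-- Probability of an event under a probability mass function `P` on a finite sample space. -/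
noncomputable def pr {Ω : Type*} [Fintype Ω] (P : Ω → ℝ) (A : Set Ω) : ℝ :=
  ∑ ω : Ω, if ω ∈ A then P ω else 0

/-- Conditional probability `P(A | B) = P(A ∩ B) / P(B)`. -/
noncomputable def cpr {Ω : Type*} [Fintype Ω] (P : Ω → ℝ) (A B : Set Ω) : ℝ :=
  pr P (A ∩ B) / pr P B

/-- Expectation of a real random variable. -/
noncomputable def ex {Ω : Type*} [Fintype Ω] (P : Ω → ℝ) (Z : Ω → ℝ) : ℝ :=
  ∑ ω : Ω, P ω * Z ω

/-- Conditional expectation `E[Z | B]`. -/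
noncomputable def cex {Ω : Type*} [Fintype Ω] (P : Ω → ℝ) (Z : Ω → ℝ) (B : Set Ω) : ℝ :=
  (∑ ω : Ω, if ω ∈ B then P ω * Z ω else 0) / pr P B

section helpers
variable {Ω : Type*} [Fintype Ω]

private lemma fin2_cases (a : Fin 2) : a = 0 ∨ a = 1 := by omega

private lemma pr_nonneg (P : Ω → ℝ) (hP0 : ∀ ω, 0 ≤ P ω) (A : Set Ω) : 0 ≤ pr P A := by
  unfold pr
  refine Finset.sum_nonneg fun ω _ => ?_
  split_ifs
  · exact hP0 ω
  · exact le_refl 0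

private lemma pr_mono (P : Ω → ℝ) (hP0 : ∀ ω, 0 ≤ P ω) {A B : Set Ω} (h : A ⊆ B) :
    pr P A ≤ pr P B := by
  unfold pr
  refine Finset.sum_le_sum fun ω _ => ?_
  by_cases hA : ω ∈ A
  · simp [hA, h hA]
  · by_cases hB : ω ∈ B <;> simp [hA, hB, hP0 ω]

private lemma pr_split (P : Ω → ℝ) (g : Ω → Fin 2) (A : Set Ω) :
    pr P A = pr P (A ∩ {ω | g ω = 0}) + pr P (A ∩ {ω | g ω = 1}) := by
  unfold pr
  rw [← Finset.sum_add_distrib]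
  refine Finset.sum_congr rfl fun ω _ => ?_
  by_cases hA : ω ∈ A
  · rcases fin2_cases (g ω) with h | h <;>
      simp [hA, Set.mem_inter_iff, Set.mem_setOf_eq, h]
  · simp [hA]

private lemma pr_split8 (P : Ω → ℝ) (f g h : Ω → Fin 2) (A : Set Ω) :
    pr P A = ∑ a : Fin 2, ∑ b : Fin 2, ∑ d : Fin 2,
      pr P (A ∩ {ω | f ω = a ∧ g ω = b ∧ h ω = d}) := by
  simp only [Fin.sum_univ_two]
  unfold pr
  simp only [← Finset.sum_add_distrib]
  refine Finset.sum_congr rfl fun ω _ => ?_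
  by_cases hA : ω ∈ A
  · rcases fin2_cases (f ω) with hf | hf <;> rcases fin2_cases (g ω) with hg | hg <;>
      rcases fin2_cases (h ω) with hh | hh <;>
      simp [hA, Set.mem_inter_iff, Set.mem_setOf_eq, hf, hg, hh]
  · simp [hA]

end helpers

private lemma key_formula
    {Ω 𝒳 : Type*} [Fintype Ω] [Fintype 𝒳]
    (P : Ω → ℝ) (hP0 : ∀ ω, 0 ≤ P ω)
    (X : Ω → 𝒳) (T : Ω → Fin 2)
    (Ys Yp : Fin 2 → Ω → Fin 2)
    (Y : Ω → Fin 2) (hcons : ∀ ω, Y ω = Yp (T ω) ω)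
    (hig : ∀ x : 𝒳, 0 < pr P {ω | X ω = x} →
      ∀ a b c d t : Fin 2,
        cpr P ({ω | Ys 0 ω = a ∧ Ys 1 ω = b ∧ Yp 0 ω = c ∧ Yp 1 ω = d} ∩ {ω | T ω = t})
            {ω | X ω = x}
          = cpr P {ω | Ys 0 ω = a ∧ Ys 1 ω = b ∧ Yp 0 ω = c ∧ Yp 1 ω = d} {ω | X ω = x}
            * cpr P {ω | T ω = t} {ω | X ω = x})
    (hpos : ∀ x : 𝒳, 0 < pr P {ω | X ω = x} →
      0 < cpr P {ω | T ω = 1} {ω | X ω = x} ∧ cpr P {ω | T ω = 1} {ω | X ω = x} < 1)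
    (α β : Fin 2 → ℝ)
    (hme : ∀ (t : Fin 2) (x : 𝒳), 0 < pr P {ω | X ω = x} →
      (0 < pr P {ω | Ys t ω = 0 ∧ X ω = x} →
        cpr P {ω | Yp t ω = 1} {ω | Ys t ω = 0 ∧ X ω = x} = α t) ∧
      (0 < pr P {ω | Ys t ω = 1 ∧ X ω = x} →
        cpr P {ω | Yp t ω = 0} {ω | Ys t ω = 1 ∧ X ω = x} = β t))
    (t : Fin 2) (x : 𝒳) (hx : 0 < pr P {ω | X ω = x}) :
    cpr P {ω | Y ω = 1} {ω | X ω = x ∧ T ω = t}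
      = α t + (1 - α t - β t) * cpr P {ω | Ys t ω = 1} {ω | X ω = x} := by
  have hq : pr P {ω | X ω = x} ≠ 0 := ne_of_gt hx
  set q := pr P {ω | X ω = x} with hqdef
  -- probability of treatment arm is positive
  have hcT : 0 < cpr P {ω | T ω = t} {ω | X ω = x} := by
    obtain ⟨h1, h2⟩ := hpos x hx
    rcases fin2_cases t with rfl | rfl
    · have hsplit := pr_split P T {ω | X ω = x}
      have e0 : {ω | X ω = x} ∩ {ω | T ω = 0} = {ω | T ω = 0} ∩ {ω | X ω = x} :=
        Set.inter_comm _ _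
      have e1 : {ω | X ω = x} ∩ {ω | T ω = 1} = {ω | T ω = 1} ∩ {ω | X ω = x} :=
        Set.inter_comm _ _
      rw [e0, e1] at hsplit
      unfold cpr at h2 ⊢
      rw [div_lt_one hx] at h2
      have : 0 < pr P ({ω | T ω = 0} ∩ {ω | X ω = x}) := by linarith
      exact div_pos this hx
    · exact h1
  -- independence of the proxy from treatment, conditional on X = x
  have hindpr : pr P (({ω | Yp t ω = 1} ∩ {ω | T ω = t}) ∩ {ω | X ω = x})
      = pr P ({ω | Yp t ω = 1} ∩ {ω | X ω = x}) * cpr P {ω | T ω = t} {ω | X ω = x} := by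
    rcases fin2_cases t with rfl | rfl
    · have e1 : ∀ a b d : Fin 2,
          pr P ((({ω | Yp 0 ω = 1} ∩ {ω | T ω = 0}) ∩ {ω | X ω = x})
              ∩ {ω | Ys 0 ω = a ∧ Ys 1 ω = b ∧ Yp 1 ω = d})
            = cpr P {ω | Ys 0 ω = a ∧ Ys 1 ω = b ∧ Yp 0 ω = 1 ∧ Yp 1 ω = d} {ω | X ω = x}
              * cpr P {ω | T ω = 0} {ω | X ω = x} * q := by
        intro a b d
        have hig' := hig x hx a b 1 d 0
        have hset : (({ω | Yp 0 ω = 1} ∩ {ω | T ω = 0}) ∩ {ω | X ω = x})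
              ∩ {ω | Ys 0 ω = a ∧ Ys 1 ω = b ∧ Yp 1 ω = d}
            = ({ω | Ys 0 ω = a ∧ Ys 1 ω = b ∧ Yp 0 ω = 1 ∧ Yp 1 ω = d} ∩ {ω | T ω = 0})
              ∩ {ω | X ω = x} := by
          ext ω; simp only [Set.mem_inter_iff, Set.mem_setOf_eq]; tauto
        rw [hset, ← hig']
        unfold cpr
        field_simp
        rw [← hqdef, mul_div_assoc, div_self hq, mul_one]
      have e2 : ∀ a b d : Fin 2,
          pr P (({ω | Yp 0 ω = 1} ∩ {ω | X ω = x})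
              ∩ {ω | Ys 0 ω = a ∧ Ys 1 ω = b ∧ Yp 1 ω = d})
            = cpr P {ω | Ys 0 ω = a ∧ Ys 1 ω = b ∧ Yp 0 ω = 1 ∧ Yp 1 ω = d} {ω | X ω = x}
              * q := by
        intro a b d
        have hset : ({ω | Yp 0 ω = 1} ∩ {ω | X ω = x})
              ∩ {ω | Ys 0 ω = a ∧ Ys 1 ω = b ∧ Yp 1 ω = d}
            = {ω | Ys 0 ω = a ∧ Ys 1 ω = b ∧ Yp 0 ω = 1 ∧ Yp 1 ω = d}
              ∩ {ω | X ω = x} := by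
          ext ω; simp only [Set.mem_inter_iff, Set.mem_setOf_eq]; tauto
        rw [hset]
        unfold cpr
        field_simp
        rw [← hqdef, mul_div_assoc, div_self hq, mul_one]
      have s1 := pr_split8 P (Ys 0) (Ys 1) (Yp 1)
        (({ω | Yp 0 ω = 1} ∩ {ω | T ω = 0}) ∩ {ω | X ω = x})
      have s2 := pr_split8 P (Ys 0) (Ys 1) (Yp 1) ({ω | Yp 0 ω = 1} ∩ {ω | X ω = x})
      simp only [e1] at s1
      simp only [e2] at s2
      rw [s1, s2]
      simp only [Fin.sum_univ_two]
      ring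
    · have e1 : ∀ a b d : Fin 2,
          pr P ((({ω | Yp 1 ω = 1} ∩ {ω | T ω = 1}) ∩ {ω | X ω = x})
              ∩ {ω | Ys 0 ω = a ∧ Ys 1 ω = b ∧ Yp 0 ω = d})
            = cpr P {ω | Ys 0 ω = a ∧ Ys 1 ω = b ∧ Yp 0 ω = d ∧ Yp 1 ω = 1} {ω | X ω = x}
              * cpr P {ω | T ω = 1} {ω | X ω = x} * q := by
        intro a b d
        have hig' := hig x hx a b d 1 1
        have hset : (({ω | Yp 1 ω = 1} ∩ {ω | T ω = 1}) ∩ {ω | X ω = x})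
              ∩ {ω | Ys 0 ω = a ∧ Ys 1 ω = b ∧ Yp 0 ω = d}
            = ({ω | Ys 0 ω = a ∧ Ys 1 ω = b ∧ Yp 0 ω = d ∧ Yp 1 ω = 1} ∩ {ω | T ω = 1})
              ∩ {ω | X ω = x} := by
          ext ω; simp only [Set.mem_inter_iff, Set.mem_setOf_eq]; tauto
        rw [hset, ← hig']
        unfold cpr
        field_simp
        rw [← hqdef, mul_div_assoc, div_self hq, mul_one]
      have e2 : ∀ a b d : Fin 2,
          pr P (({ω | Yp 1 ω = 1} ∩ {ω | X ω = x})
              ∩ {ω | Ys 0 ω = a ∧ Ys 1 ω = b ∧ Yp 0 ω = d})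
            = cpr P {ω | Ys 0 ω = a ∧ Ys 1 ω = b ∧ Yp 0 ω = d ∧ Yp 1 ω = 1} {ω | X ω = x}
              * q := by
        intro a b d
        have hset : ({ω | Yp 1 ω = 1} ∩ {ω | X ω = x})
              ∩ {ω | Ys 0 ω = a ∧ Ys 1 ω = b ∧ Yp 0 ω = d}
            = {ω | Ys 0 ω = a ∧ Ys 1 ω = b ∧ Yp 0 ω = d ∧ Yp 1 ω = 1}
              ∩ {ω | X ω = x} := by
          ext ω; simp only [Set.mem_inter_iff, Set.mem_setOf_eq]; tauto
        rw [hset]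
        unfold cpr
        field_simp
        rw [← hqdef, mul_div_assoc, div_self hq, mul_one]
      have s1 := pr_split8 P (Ys 0) (Ys 1) (Yp 0)
        (({ω | Yp 1 ω = 1} ∩ {ω | T ω = 1}) ∩ {ω | X ω = x})
      have s2 := pr_split8 P (Ys 0) (Ys 1) (Yp 0) ({ω | Yp 1 ω = 1} ∩ {ω | X ω = x})
      simp only [e1] at s1
      simp only [e2] at s2
      rw [s1, s2]
      simp only [Fin.sum_univ_two]
      ring
  -- measurement error model: formula for cpr of the proxy given X = x
  have hform : cpr P {ω | Yp t ω = 1} {ω | X ω = x}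
      = α t + (1 - α t - β t) * cpr P {ω | Ys t ω = 1} {ω | X ω = x} := by
    have hr0 : 0 ≤ pr P {ω | Ys t ω = 0 ∧ X ω = x} := pr_nonneg P hP0 _
    have hr1 : 0 ≤ pr P {ω | Ys t ω = 1 ∧ X ω = x} := pr_nonneg P hP0 _
    have hsum : q = pr P {ω | Ys t ω = 0 ∧ X ω = x} + pr P {ω | Ys t ω = 1 ∧ X ω = x} := by
      have h := pr_split P (Ys t) {ω | X ω = x}
      have e0 : {ω | X ω = x} ∩ {ω | Ys t ω = 0} = {ω | Ys t ω = 0 ∧ X ω = x} := by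
        ext ω; simp only [Set.mem_inter_iff, Set.mem_setOf_eq]; tauto
      have e1 : {ω | X ω = x} ∩ {ω | Ys t ω = 1} = {ω | Ys t ω = 1 ∧ X ω = x} := by
        ext ω; simp only [Set.mem_inter_iff, Set.mem_setOf_eq]; tauto
      rw [e0, e1] at h
      exact h
    have hA : pr P ({ω | Yp t ω = 1} ∩ {ω | Ys t ω = 0 ∧ X ω = x})
        = α t * pr P {ω | Ys t ω = 0 ∧ X ω = x} := by
      rcases eq_or_lt_of_le hr0 with h | h
      · have h1 : pr P ({ω | Yp t ω = 1} ∩ {ω | Ys t ω = 0 ∧ X ω = x})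
            ≤ pr P {ω | Ys t ω = 0 ∧ X ω = x} :=
          pr_mono P hP0 Set.inter_subset_right
        have h2 : 0 ≤ pr P ({ω | Yp t ω = 1} ∩ {ω | Ys t ω = 0 ∧ X ω = x}) :=
          pr_nonneg P hP0 _
        rw [← h] at h1 ⊢
        rw [mul_zero]
        linarith
      · have hm := (hme t x hx).1 h
        unfold cpr at hm
        rw [div_eq_iff (ne_of_gt h)] at hm
        exact hm
    have hB : pr P ({ω | Yp t ω = 0} ∩ {ω | Ys t ω = 1 ∧ X ω = x})
        = β t * pr P {ω | Ys t ω = 1 ∧ X ω = x} := by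
      rcases eq_or_lt_of_le hr1 with h | h
      · have h1 : pr P ({ω | Yp t ω = 0} ∩ {ω | Ys t ω = 1 ∧ X ω = x})
            ≤ pr P {ω | Ys t ω = 1 ∧ X ω = x} :=
          pr_mono P hP0 Set.inter_subset_right
        have h2 : 0 ≤ pr P ({ω | Yp t ω = 0} ∩ {ω | Ys t ω = 1 ∧ X ω = x}) :=
          pr_nonneg P hP0 _
        rw [← h] at h1 ⊢
        rw [mul_zero]
        linarith
      · have hm := (hme t x hx).2 h
        unfold cpr at hm
        rw [div_eq_iff (ne_of_gt h)] at hm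
        exact hm
    have hC : pr P ({ω | Yp t ω = 1} ∩ {ω | Ys t ω = 1 ∧ X ω = x})
        = (1 - β t) * pr P {ω | Ys t ω = 1 ∧ X ω = x} := by
      have h := pr_split P (Yp t) {ω | Ys t ω = 1 ∧ X ω = x}
      have e0 : {ω | Ys t ω = 1 ∧ X ω = x} ∩ {ω | Yp t ω = 0}
          = {ω | Yp t ω = 0} ∩ {ω | Ys t ω = 1 ∧ X ω = x} := Set.inter_comm _ _
      have e1 : {ω | Ys t ω = 1 ∧ X ω = x} ∩ {ω | Yp t ω = 1}
          = {ω | Yp t ω = 1} ∩ {ω | Ys t ω = 1 ∧ X ω = x} := Set.inter_comm _ _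
      rw [e0, e1, hB] at h
      have : (1 - β t) * pr P {ω | Ys t ω = 1 ∧ X ω = x}
          = pr P {ω | Ys t ω = 1 ∧ X ω = x}
            - β t * pr P {ω | Ys t ω = 1 ∧ X ω = x} := by ring
      rw [this]
      linarith
    have hD : pr P ({ω | Yp t ω = 1} ∩ {ω | X ω = x})
        = α t * pr P {ω | Ys t ω = 0 ∧ X ω = x}
          + (1 - β t) * pr P {ω | Ys t ω = 1 ∧ X ω = x} := by
      have h := pr_split P (Ys t) ({ω | Yp t ω = 1} ∩ {ω | X ω = x})
      have e0 : ({ω | Yp t ω = 1} ∩ {ω | X ω = x}) ∩ {ω | Ys t ω = 0}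
          = {ω | Yp t ω = 1} ∩ {ω | Ys t ω = 0 ∧ X ω = x} := by
        ext ω; simp only [Set.mem_inter_iff, Set.mem_setOf_eq]; tauto
      have e1 : ({ω | Yp t ω = 1} ∩ {ω | X ω = x}) ∩ {ω | Ys t ω = 1}
          = {ω | Yp t ω = 1} ∩ {ω | Ys t ω = 1 ∧ X ω = x} := by
        ext ω; simp only [Set.mem_inter_iff, Set.mem_setOf_eq]; tauto
      rw [e0, e1, hA, hC] at h
      exact h
    have eS1 : {ω | Ys t ω = 1} ∩ {ω | X ω = x} = {ω | Ys t ω = 1 ∧ X ω = x} := by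
      ext ω; simp only [Set.mem_inter_iff, Set.mem_setOf_eq]
    unfold cpr
    rw [eS1, hD]
    have hr0eq : pr P {ω | Ys t ω = 0 ∧ X ω = x}
        = q - pr P {ω | Ys t ω = 1 ∧ X ω = x} := by linarith
    rw [hr0eq]
    rw [← hqdef]
    field_simp
    ring
  -- assemble
  have hnum : {ω | Y ω = 1} ∩ {ω | X ω = x ∧ T ω = t}
      = ({ω | Yp t ω = 1} ∩ {ω | T ω = t}) ∩ {ω | X ω = x} := by
    ext ω
    simp only [Set.mem_inter_iff, Set.mem_setOf_eq]
    constructor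
    · rintro ⟨hy, hx', ht'⟩
      refine ⟨⟨?_, ht'⟩, hx'⟩
      rw [← ht', ← hcons ω]
      exact hy
    · rintro ⟨⟨hyp, ht'⟩, hx'⟩
      refine ⟨?_, hx', ht'⟩
      rw [hcons ω, ht']
      exact hyp
  have hden : {ω | X ω = x ∧ T ω = t} = {ω | T ω = t} ∩ {ω | X ω = x} := by
    ext ω; simp only [Set.mem_inter_iff, Set.mem_setOf_eq]; tauto
  have hTq : 0 < pr P ({ω | T ω = t} ∩ {ω | X ω = x}) := by
    unfold cpr at hcT
    have h := mul_pos hcT hx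
    rwa [div_mul_cancel₀ _ hq] at h
  have hTq' : pr P ({ω | T ω = t} ∩ {ω | X ω = x}) ≠ 0 := ne_of_gt hTq
  rw [← hform]
  unfold cpr
  rw [hnum, hden, hindpr]
  unfold cpr
  field_simp

/-- Under consistency, ignorability, positivity and the treatment-conditional
measurement error model, if the min and max anchor assumptions hold for the target potential
outcome under treatment `t` (the minimum of `P(Y*_t = 1 | X = x)` over covariate values with
positive probability is `0` and the maximum is `1`), then the error parameters are identified
from the observational distribution: `α_t` is the minimum of `P(Y = 1 | X = x, T = t)` over such
`x`, and `β_t` is one minus the maximum. Minima and maxima of sets are expressed via `IsLeast`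
and `IsGreatest`. -/
theorem error_params_identified_from_observational_data
    {Ω 𝒳 : Type*} [Fintype Ω] [Fintype 𝒳] [Nonempty 𝒳]
    (P : Ω → ℝ) (hP0 : ∀ ω, 0 ≤ P ω) (hP1 : ∑ ω : Ω, P ω = 1)
    (X : Ω → 𝒳) (T : Ω → Fin 2)
    -- target potential outcomes `Ys t` and proxy potential outcomes `Yp t`, `t ∈ {0,1}`
    (Ys Yp : Fin 2 → Ω → Fin 2)
    -- consistency: the observed proxy outcome
    (Y : Ω → Fin 2) (hcons : ∀ ω, Y ω = Yp (T ω) ω)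
    -- ignorability: `(Y*₀, Y*₁, Y₀, Y₁) ⟂ T | X = x`
    (hig : ∀ x : 𝒳, 0 < pr P {ω | X ω = x} →
      ∀ a b c d t : Fin 2,
        cpr P ({ω | Ys 0 ω = a ∧ Ys 1 ω = b ∧ Yp 0 ω = c ∧ Yp 1 ω = d} ∩ {ω | T ω = t})
            {ω | X ω = x}
          = cpr P {ω | Ys 0 ω = a ∧ Ys 1 ω = b ∧ Yp 0 ω = c ∧ Yp 1 ω = d} {ω | X ω = x}
            * cpr P {ω | T ω = t} {ω | X ω = x})
    -- positivity
    (hpos : ∀ x : 𝒳, 0 < pr P {ω | X ω = x} →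
      0 < cpr P {ω | T ω = 1} {ω | X ω = x} ∧ cpr P {ω | T ω = 1} {ω | X ω = x} < 1)
    -- treatment-conditional measurement error model
    (α β : Fin 2 → ℝ)
    (hα : ∀ t, α t ∈ Set.Ico (0:ℝ) 1) (hβ : ∀ t, β t ∈ Set.Ico (0:ℝ) 1)
    (hαβ : ∀ t, α t + β t < 1)
    (hme : ∀ (t : Fin 2) (x : 𝒳), 0 < pr P {ω | X ω = x} →
      (0 < pr P {ω | Ys t ω = 0 ∧ X ω = x} →
        cpr P {ω | Yp t ω = 1} {ω | Ys t ω = 0 ∧ X ω = x} = α t) ∧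
      (0 < pr P {ω | Ys t ω = 1 ∧ X ω = x} →
        cpr P {ω | Yp t ω = 0} {ω | Ys t ω = 1 ∧ X ω = x} = β t))
    (t : Fin 2)
    -- min anchor: some covariate value attains target class probability 0
    (hmin : IsLeast {p : ℝ | ∃ x : 𝒳, 0 < pr P {ω | X ω = x} ∧
      p = cpr P {ω | Ys t ω = 1} {ω | X ω = x}} 0)
    -- max anchor: some covariate value attains target class probability 1
    (hmax : IsGreatest {p : ℝ | ∃ x : 𝒳, 0 < pr P {ω | X ω = x} ∧
      p = cpr P {ω | Ys t ω = 1} {ω | X ω = x}} 1) :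
    IsLeast {p : ℝ | ∃ x : 𝒳, 0 < pr P {ω | X ω = x} ∧
      p = cpr P {ω | Y ω = 1} {ω | X ω = x ∧ T ω = t}} (α t) ∧
    IsGreatest {p : ℝ | ∃ x : 𝒳, 0 < pr P {ω | X ω = x} ∧
      p = cpr P {ω | Y ω = 1} {ω | X ω = x ∧ T ω = t}} (1 - β t) := by
  have hone : (0:ℝ) < 1 - α t - β t := by have := hαβ t; linarith
  have hkey : ∀ x : 𝒳, 0 < pr P {ω | X ω = x} →
      cpr P {ω | Y ω = 1} {ω | X ω = x ∧ T ω = t}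
        = α t + (1 - α t - β t) * cpr P {ω | Ys t ω = 1} {ω | X ω = x} :=
    fun x hx => key_formula P hP0 X T Ys Yp Y hcons hig hpos α β hme t x hx
  constructor
  · constructor
    · obtain ⟨x0, hx0, h0⟩ := hmin.1
      exact ⟨x0, hx0, by rw [hkey x0 hx0, ← h0]; ring⟩
    · rintro p ⟨x, hx, hp⟩
      have hge : 0 ≤ cpr P {ω | Ys t ω = 1} {ω | X ω = x} := hmin.2 ⟨x, hx, rfl⟩
      rw [hkey x hx] at hp
      nlinarith
  · constructor
    · obtain ⟨x1, hx1, h1⟩ := hmax.1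
      exact ⟨x1, hx1, by rw [hkey x1 hx1, ← h1]; ring⟩
    · rintro p ⟨x, hx, hp⟩
      have hle : cpr P {ω | Ys t ω = 1} {ω | X ω = x} ≤ 1 := hmax.2 ⟨x, hx, rfl⟩
      rw [hkey x hx] at hp
      nlinarith
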